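/- Let G be a valued group. The following are equivalent: (a) G is nearly Abelian; (b) for all f ∈ G and all g ∈ G with g ≠ 1, (f*g*f⁻¹)*g⁻¹ ≺ g (i.e. f*g*f⁻¹ ∼ g); (c) for all f, g ∈ G with f*g ≠ 1, (f*g)*(g*f)⁻¹ ≺ f*g (i.e. f*g ∼ g*f). -/
import Mathlib


variable {G : Type*} [Group G]

/-- `f ≺ g` : strict part of the dominance relation. -/
def vlt (le : G → G → Prop) (f g : G) : Prop := le f g ∧ ¬ le g f

/-- `f ≍ g` : equivalence induced by the dominance relation. -/
def veq (le : G → G → Prop) (f g : G) : Prop := le f g ∧ le g f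

/-- A dominance relation on a group `G`, making it a valued group:
a reflexive, transitive, total relation satisfying D1-D4. -/
structure IsValuation (le : G → G → Prop) : Prop where
  refl : ∀ f : G, le f f
  trans : ∀ f g h : G, le f g → le g h → le f h
  total : ∀ f g : G, le f g ∨ le g f
  d1 : ∀ f : G, f ≠ 1 → vlt le 1 f
  d2 : ∀ f g : G, le (f * g) f ∨ le (f * g) g
  d3 : ∀ f g h : G, le f g → le (h * f * h⁻¹) (h * g * h⁻¹)
  d4 : ∀ f : G, veq le f f⁻¹

/-- A valued group is nearly Abelian if `⁅f,g⁆ ≺ f` and `⁅f,g⁆ ≺ g` for all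
nonidentity `f, g`. -/
def NearlyAbelian (le : G → G → Prop) : Prop :=
  ∀ f g : G, f ≠ 1 → g ≠ 1 →
    vlt le (f⁻¹ * g⁻¹ * f * g) f ∧ vlt le (f⁻¹ * g⁻¹ * f * g) g

section helpers

variable {le : G → G → Prop}

/-- congruence of `vlt` with respect to `≍`-replacement on both sides. -/
private lemma vlt_congr (hv : IsValuation le) {x x' a a' : G}
    (hx : le x' x) (ha : le a a') (ha' : le a' a) {h : vlt le x a} :
    vlt le x' a' :=
  ⟨hv.trans _ _ _ hx (hv.trans _ _ _ h.1 ha),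
   fun hc => h.2 (hv.trans _ _ _ ha (hv.trans _ _ _ hc hx))⟩

/-- If `a * b⁻¹ ≺ a` then `a ≍ b`. -/
private lemma key1 (hv : IsValuation le) {a b : G} (h : vlt le (a * b⁻¹) a) :
    le a b ∧ le b a := by
  have hba : le (b * a⁻¹) (a * b⁻¹) := by
    have := (hv.d4 (a * b⁻¹)).2
    simpa [mul_inv_rev] using this
  constructor
  · rcases hv.d2 (a * b⁻¹) b with h1 | h1
    · exact absurd (by simpa using h1) h.2
    · simpa using h1
  · rcases hv.d2 (b * a⁻¹) a with h1 | h1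
    · have h1' : le b (b * a⁻¹) := by simpa using h1
      exact hv.trans _ _ _ h1' (hv.trans _ _ _ hba h.1)
    · simpa using h1

/-- If `a * b⁻¹ ≺ b` then `a ≍ b`. -/
private lemma key2 (hv : IsValuation le) {a b : G} (h : vlt le (a * b⁻¹) b) :
    le a b ∧ le b a := by
  have hba : le (b * a⁻¹) (a * b⁻¹) := by
    have := (hv.d4 (a * b⁻¹)).2
    simpa [mul_inv_rev] using this
  constructor
  · rcases hv.d2 (a * b⁻¹) b with h1 | h1
    · exact hv.trans _ _ _ (by simpa using h1) h.1
    · simpa using h1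
  · rcases hv.d2 (b * a⁻¹) a with h1 | h1
    · have h1' : le b (b * a⁻¹) := by simpa using h1
      exact absurd (hv.trans _ _ _ h1' hba) h.2
    · simpa using h1

end helpers

/-- Proposition 7.8: the following are equivalent: (a) `G` is nearly Abelian;
(b) `f*g*f⁻¹ ∼ g` for all `f` and all `g ≠ 1`;
(c) `f*g ∼ g*f` for all `f, g` with `f*g ≠ 1`. -/
theorem nearlyAbelian_tfae (le : G → G → Prop) (hv : IsValuation le) :
    [NearlyAbelian le,
     ∀ f g : G, g ≠ 1 → vlt le ((f * g * f⁻¹) * g⁻¹) g,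
     ∀ f g : G, f * g ≠ 1 → vlt le ((f * g) * (g * f)⁻¹) (f * g)].TFAE := by
  tfae_have 1 → 2 := by
    intro h1 f g hg
    by_cases hf : f = 1
    · subst hf
      simpa using hv.d1 g hg
    · have h := (h1 f⁻¹ g⁻¹ (inv_ne_one.2 hf) (inv_ne_one.2 hg)).2
      have he : f⁻¹⁻¹ * g⁻¹⁻¹ * f⁻¹ * g⁻¹ = (f * g * f⁻¹) * g⁻¹ := by group
      rw [he] at h
      exact vlt_congr hv (hv.refl _) (hv.d4 g).2 (hv.d4 g).1 (h := h)
  tfae_have 2 → 1 := by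
    intro h2 f g hf hg
    constructor
    · have h := h2 g⁻¹ f⁻¹ (inv_ne_one.2 hf)
      have he : (g⁻¹ * f⁻¹ * g⁻¹⁻¹) * f⁻¹⁻¹ = (f⁻¹ * g⁻¹ * f * g)⁻¹ := by group
      rw [he] at h
      exact vlt_congr hv (hv.d4 _).1 (hv.d4 f).2 (hv.d4 f).1 (h := h)
    · have h := h2 f⁻¹ g⁻¹ (inv_ne_one.2 hg)
      have he : (f⁻¹ * g⁻¹ * f⁻¹⁻¹) * g⁻¹⁻¹ = f⁻¹ * g⁻¹ * f * g := by group
      rw [he] at h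
      exact vlt_congr hv (hv.refl _) (hv.d4 g).2 (hv.d4 g).1 (h := h)
  tfae_have 2 → 3 := by
    intro h2 f g hfg
    have hgf : g * f ≠ 1 := by
      intro h
      exact hfg (by rw [eq_inv_of_mul_eq_one_left h]; group)
    have h := h2 f (g * f) hgf
    have he : (f * (g * f) * f⁻¹) * (g * f)⁻¹ = (f * g) * (g * f)⁻¹ := by group
    rw [he] at h
    obtain ⟨hab, hba⟩ := key2 hv h
    exact vlt_congr hv (hv.refl _) hba hab (h := h)
  tfae_have 3 → 2 := by
    intro h3 f g hg
    have hne : (f * g) * f⁻¹ ≠ 1 := by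
      intro h
      exact hg (mul_left_cancel (a := f) (by rw [mul_inv_eq_one.mp h, mul_one]))
    have h := h3 (f * g) f⁻¹ hne
    have he : ((f * g) * f⁻¹) * (f⁻¹ * (f * g))⁻¹ = (f * g * f⁻¹) * g⁻¹ := by group
    have he2 : (f * g) * f⁻¹ = f * g * f⁻¹ := by group
    rw [he, he2] at h
    obtain ⟨hab, hba⟩ := key1 hv h
    exact vlt_congr hv (hv.refl _) hab hba (h := h)
  tfae_finish
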